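/- The Sign-Magnetic Laplacian L^σ is positive semidefinite: for every x ∈ ℂⁿ, x* L^σ x ≥ 0, even when the entries of A may be negative. -/

import Mathlib

open Matrix Complex

/-- Symmetrized adjacency matrix `A_s = (A + Aᵀ)/2`. -/
noncomputable def symAdj {n : ℕ} (A : Matrix (Fin n) (Fin n) ℝ) :
    Matrix (Fin n) (Fin n) ℝ :=
  fun i j => (A i j + A j i) / 2

/-- The matrix `H^σ = A_s ⊙ (ee^⊤ − sgn(|A − Aᵀ|) + i·sgn(|A| − |Aᵀ|))`, entrywise. -/
noncomputable def Hsigma {n : ℕ} (A : Matrix (Fin n) (Fin n) ℝ) :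
    Matrix (Fin n) (Fin n) ℂ :=
  fun i j => (symAdj A i j : ℂ) *
    (((1 - Real.sign |A i j - A j i| : ℝ) : ℂ) +
      Complex.I * ((Real.sign (|A i j| - |A j i|) : ℝ) : ℂ))

/-- The degree matrix `D̄_s = Diag(|A_s| e)`. -/
noncomputable def DbarS {n : ℕ} (A : Matrix (Fin n) (Fin n) ℝ) :
    Matrix (Fin n) (Fin n) ℂ :=
  Matrix.diagonal (fun i => ((∑ j, |symAdj A i j| : ℝ) : ℂ))

/-- The Sign-Magnetic Laplacian `L^σ = D̄_s − H^σ`. -/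
noncomputable def Lsigma {n : ℕ} (A : Matrix (Fin n) (Fin n) ℝ) :
    Matrix (Fin n) (Fin n) ℂ :=
  DbarS A - Hsigma A

open scoped ComplexOrder


lemma symAdj_symm {n : ℕ} (A : Matrix (Fin n) (Fin n) ℝ) (i j : Fin n) :
    symAdj A i j = symAdj A j i := by
  simp [symAdj]; ring

lemma star_Hsigma {n : ℕ} (A : Matrix (Fin n) (Fin n) ℝ) (i j : Fin n) :
    star (Hsigma A j i) = Hsigma A i j := by
  simp only [Hsigma, star_mul', star_add, Complex.star_def, _root_.map_mul, Complex.conj_ofReal,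
    Complex.conj_I]
  rw [symAdj_symm A j i, abs_sub_comm (A j i) (A i j)]
  have : Real.sign (|A j i| - |A i j|) = - Real.sign (|A i j| - |A j i|) := by
    rw [← Real.sign_neg]; ring_nf
  rw [this]
  push_cast
  ring

lemma abs_Hsigma_le {n : ℕ} (A : Matrix (Fin n) (Fin n) ℝ) (i j : Fin n) :
    ‖Hsigma A i j‖ ≤ |symAdj A i j| := by
  rw [Hsigma, norm_mul, Complex.norm_real, Real.norm_eq_abs]
  have h1 : ‖(((1 - Real.sign |A i j - A j i| : ℝ) : ℂ) +
      Complex.I * ((Real.sign (|A i j| - |A j i|) : ℝ) : ℂ))‖ ≤ 1 := by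
    by_cases h : A i j = A j i
    · simp [h, Real.sign_zero]
    · have h0 : |A i j - A j i| > 0 := abs_pos.mpr (sub_ne_zero.mpr h)
      rw [Real.sign_of_pos h0]
      simp only [sub_self, Complex.ofReal_zero, zero_add]
      rw [norm_mul, Complex.norm_I, one_mul, Complex.norm_real, Real.norm_eq_abs]
      rcases Real.sign_apply_eq (|A i j| - |A j i|) with hs | hs | hs <;> rw [hs] <;> norm_num
  calc |symAdj A i j| * ‖_‖ ≤ |symAdj A i j| * 1 :=
        mul_le_mul_of_nonneg_left h1 (abs_nonneg _)
    _ = |symAdj A i j| := mul_one _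

lemma Lsigma_isHermitian {n : ℕ} (A : Matrix (Fin n) (Fin n) ℝ) :
    (Lsigma A).IsHermitian := by
  ext i j
  simp only [Lsigma, conjTranspose_apply, Matrix.sub_apply, star_sub, star_Hsigma]
  congr 1
  simp only [DbarS, diagonal_apply]
  by_cases h : i = j
  · subst h; simp
  · simp [h, Ne.symm h]

lemma key_sum_ineq {n : ℕ} (a : Fin n → Fin n → ℝ) (ha : ∀ i j, 0 ≤ a i j)
    (hsym : ∀ i j, a i j = a j i) (y : Fin n → ℝ) :
    ∑ i, ∑ j, a i j * (y i * y j) ≤ ∑ i, ∑ j, a i j * (y i * y i) := by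
  have h2 : 2 * (∑ i, ∑ j, a i j * (y i * y j)) ≤
      (∑ i, ∑ j, a i j * (y i * y i)) + (∑ i, ∑ j, a i j * (y j * y j)) := by
    calc 2 * (∑ i, ∑ j, a i j * (y i * y j))
        = ∑ i, ∑ j, a i j * (2 * y i * y j) := by
          rw [Finset.mul_sum]; refine Finset.sum_congr rfl fun i _ => ?_
          rw [Finset.mul_sum]; refine Finset.sum_congr rfl fun j _ => ?_; ring
      _ ≤ ∑ i, ∑ j, a i j * (y i ^ 2 + y j ^ 2) := by
          refine Finset.sum_le_sum fun i _ => Finset.sum_le_sum fun j _ => ?_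
          exact mul_le_mul_of_nonneg_left (two_mul_le_add_sq _ _) (ha i j)
      _ = (∑ i, ∑ j, a i j * (y i * y i)) + (∑ i, ∑ j, a i j * (y j * y j)) := by
          rw [← Finset.sum_add_distrib]
          refine Finset.sum_congr rfl fun i _ => ?_
          rw [← Finset.sum_add_distrib]
          refine Finset.sum_congr rfl fun j _ => ?_; ring
  have h3 : (∑ i, ∑ j, a i j * (y j * y j)) = (∑ i, ∑ j, a i j * (y i * y i)) := by
    rw [Finset.sum_comm]
    refine Finset.sum_congr rfl fun i _ => Finset.sum_congr rfl fun j _ => ?_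
    rw [hsym j i]
  rw [h3] at h2
  linarith

/-- `L^σ` is positive semidefinite, even when entries of `A`
may be negative: for every `x ∈ ℂⁿ`, `x* L^σ x ≥ 0`. -/
theorem Lsigma_posSemidef {n : ℕ} (A : Matrix (Fin n) (Fin n) ℝ)
    (hloop : ∀ i, A i i = 0) :
    (Lsigma A).PosSemidef := by
  refine posSemidef_iff_dotProduct_mulVec.mpr ⟨Lsigma_isHermitian A, fun x => ?_⟩
  set q := star x ⬝ᵥ Lsigma A *ᵥ x with hq
  have him : q.im = 0 := by
    have hc : star q = q := by
      nth_rewrite 1 [hq]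
      rw [star_dotProduct, star_star, star_mulVec, (Lsigma_isHermitian A).eq,
        ← dotProduct_mulVec, ← hq]
    have h2 := congrArg Complex.im hc
    simp only [Complex.star_def, Complex.conj_im] at h2
    linarith
  rw [Complex.le_def]
  refine ⟨?_, by simp [him]⟩
  simp only [Complex.zero_re]
  -- compute q.re
  have hsplit : q = (star x ⬝ᵥ DbarS A *ᵥ x) - (star x ⬝ᵥ Hsigma A *ᵥ x) := by
    rw [hq, Lsigma, sub_mulVec, dotProduct_sub]
  have hD : (star x ⬝ᵥ DbarS A *ᵥ x).re = ∑ i, (∑ j, |symAdj A i j|) * Complex.normSq (x i) := by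
    rw [dotProduct, Complex.re_sum]
    refine Finset.sum_congr rfl fun i _ => ?_
    rw [DbarS, mulVec_diagonal, Pi.star_apply, Complex.star_def]
    have h1 : (starRingEnd ℂ) (x i) * ((((∑ j, |symAdj A i j| : ℝ)) : ℂ) * x i)
        = (((∑ j, |symAdj A i j| : ℝ)) : ℂ) * ((starRingEnd ℂ) (x i) * x i) := by ring
    rw [h1, ← Complex.normSq_eq_conj_mul_self, ← Complex.ofReal_mul, Complex.ofReal_re]
  have hH : (star x ⬝ᵥ Hsigma A *ᵥ x).re ≤
      ∑ i, ∑ j, |symAdj A i j| * (‖x i‖ * ‖x j‖) := by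
    rw [dotProduct, Complex.re_sum]
    refine Finset.sum_le_sum fun i _ => ?_
    rw [mulVec, dotProduct, Finset.mul_sum, Complex.re_sum]
    refine Finset.sum_le_sum fun j _ => ?_
    calc (star x i * (Hsigma A i j * x j)).re ≤ ‖star x i * (Hsigma A i j * x j)‖ :=
          Complex.re_le_norm _
      _ = ‖Hsigma A i j‖ * (‖x i‖ * ‖x j‖) := by
          rw [Pi.star_apply, norm_mul, norm_mul, Complex.star_def,
            Complex.norm_conj]; ring
      _ ≤ |symAdj A i j| * (‖x i‖ * ‖x j‖) :=
          mul_le_mul_of_nonneg_right (abs_Hsigma_le A i j)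
            (mul_nonneg (norm_nonneg _) (norm_nonneg _))
  have hkey : ∑ i, ∑ j, |symAdj A i j| * (‖x i‖ * ‖x j‖) ≤
      ∑ i, (∑ j, |symAdj A i j|) * Complex.normSq (x i) := by
    have := key_sum_ineq (fun i j => |symAdj A i j|) (fun i j => abs_nonneg _)
      (fun i j => by rw [symAdj_symm A i j]) (fun i => ‖x i‖)
    refine this.trans_eq ?_
    refine Finset.sum_congr rfl fun i _ => ?_
    rw [Finset.sum_mul]
    refine Finset.sum_congr rfl fun j _ => ?_
    rw [← Complex.sq_norm]; ring
  rw [hsplit, Complex.sub_re, hD]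
  linarith
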